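/- For every i ∈ I, the set S_i ⊆ ℝ^n is compact. -/

import Mathlib

open scoped BigOperators
open MeasureTheory

noncomputable section

/-- `ℤ^n`, the exponent lattice. -/
abbrev Zn (n : ℕ) : Type := Fin n → ℤ

/-- `ℝ^n`. -/
abbrev Rn (n : ℕ) : Type := Fin n → ℝ

/-- The Laurent polynomial ring `R_n = ℂ[z_1^{±1},…,z_n^{±1}]`, realized as the group
algebra of `ℤ^n` over `ℂ`. -/
abbrev LaurentRing (n : ℕ) : Type := AddMonoidAlgebra ℂ (Zn n)

/-- The embedding `ℤ^n → ℝ^n`. -/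
def zToR {n : ℕ} (m : Zn n) : Rn n := fun j => (m j : ℝ)

/-- A bounded based sequence `F^•` of finite-rank free `R_n`-modules: a finite index set
`I = ⊔_k I_k` (with `I_k = ∅` for `k > 0` and `I_0 ≠ ∅`), recorded via a degree function,
together with the matrix entries `d^k_{ij} ∈ R_n` of the maps `F^k → F^{k+1}`. -/
structure BasedSeq (n : ℕ) where
  I : Type
  fintypeI : Fintype I
  deg : I → ℤ
  deg_nonpos : ∀ i, deg i ≤ 0
  exists_deg_zero : ∃ i, deg i = 0
  d : I → I → LaurentRing n
  d_eq_zero : ∀ i j, deg i ≠ deg j + 1 → d i j = 0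

attribute [instance] BasedSeq.fintypeI

/-- Chains witnessing membership in `E_{ij}`: `EChain F i j m` holds iff there is a chain
`j = i_0, i_1, …, i_k = i` with `deg i_ℓ = deg i_{ℓ-1} + 1` at each step, exponents
`m_ℓ` in the support of the corresponding matrix entry, and `m = m_1 + ⋯ + m_k`. -/
inductive EChain {n : ℕ} (F : BasedSeq n) : F.I → F.I → Zn n → Prop where
  | base {i j : F.I} {m : Zn n} :
      F.deg i = F.deg j + 1 → m ∈ (F.d i j).coeff.support → EChain F i j m
  | step {i j k : F.I} {m m' : Zn n} :
      EChain F j k m → F.deg i = F.deg j + 1 → m' ∈ (F.d i j).coeff.support →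
      EChain F i k (m + m')

/-- The subset `E_{ij} ⊆ ℤ^n`. -/
def Eset {n : ℕ} (F : BasedSeq n) (i j : F.I) : Set (Zn n) := {m | EChain F i j m}

/-- The condition `(m_1, …, m_k) ∈ E_{i_1 i_0} × ⋯ × E_{i_k i_{k-1}}`. -/
def goodTuple {n : ℕ} (F : BasedSeq n) {k : ℕ} (c : Fin (k + 1) → F.I)
    (m : Fin k → Zn n) : Prop :=
  ∀ ℓ : Fin k, m ℓ ∈ Eset F (c ℓ.succ) (c ℓ.castSucc)

/-- The vertex tuple `(x_{i_0}, x_{i_1}+m_1, …, x_{i_k}+m_1+⋯+m_k)` in `ℝ^n`. -/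
def vtx {n : ℕ} (F : BasedSeq n) (x : F.I → Rn n) {k : ℕ}
    (c : Fin (k + 1) → F.I) (m : Fin k → Zn n) : Fin (k + 1) → Rn n :=
  fun a => x (c a) + zToR (∑ ℓ ∈ Finset.univ.filter (fun ℓ : Fin k => (ℓ : ℕ) < (a : ℕ)), m ℓ)

/-- Membership in `X(F^•)_k`: the tuple `y` represents (mod a common `ℤ^n`-translation `t`)
one of the linear `k`-simplices `[x_{i_0}, x_{i_1}+m_1, …, x_{i_k}+m_1+⋯+m_k] mod ℤ^n`. -/
def InX {n : ℕ} (F : BasedSeq n) (x : F.I → Rn n) (k : ℕ)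
    (y : Fin (k + 1) → Rn n) : Prop :=
  ∃ (c : Fin (k + 1) → F.I) (m : Fin k → Zn n) (t : Zn n),
    goodTuple F c m ∧ ∀ a, y a = vtx F x c m a + zToR t

/-- The integer lattice `ℤ^n ⊆ ℝ^n` as an additive subgroup. -/
def intLattice (n : ℕ) : AddSubgroup (Rn n) :=
  AddSubgroup.pi Set.univ fun _ => AddSubgroup.zmultiples (1 : ℝ)

/-- The torus `T^n = ℝ^n/ℤ^n`. -/
abbrev Torus (n : ℕ) := Rn n ⧸ intLattice n

/-- The projection `π : ℝ^n → T^n`. -/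
def toTorus {n : ℕ} : Rn n → Torus n := QuotientAddGroup.mk

/-- The tropical Lagrangian coamoeba `T(F^•) ⊆ T^n`. -/
def TropT {n : ℕ} (F : BasedSeq n) (x : F.I → Rn n) : Set (Torus n) :=
  ⋃ (k : ℕ), ⋃ (c : Fin (k + 1) → F.I), ⋃ (m : Fin k → Zn n), ⋃ (_ : goodTuple F c m),
    toTorus '' convexHull ℝ (Set.range (vtx F x c m))

/-- The subset `S_i ⊆ ℝ^n`. -/
def Sset {n : ℕ} (F : BasedSeq n) (x : F.I → Rn n) (i : F.I) : Set (Rn n) :=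
  ⋃ (k : ℕ), ⋃ (c : Fin (k + 1) → F.I), ⋃ (m : Fin k → Zn n),
    ⋃ (_ : c 0 = i ∧ goodTuple F c m), convexHull ℝ (Set.range (vtx F x c m))

/-- `[x, S] = {t·x + (1−t)·y : y ∈ S, t ∈ [0,1]}`. -/
def joinSet {n : ℕ} (x : Rn n) (S : Set (Rn n)) : Set (Rn n) :=
  {p | ∃ y ∈ S, ∃ t ∈ Set.Icc (0 : ℝ) 1, p = t • x + (1 - t) • y}

/-- each `S_i` is compact. -/

lemma EChain.deg_lt {n : ℕ} {F : BasedSeq n} {i j : F.I} {m : Zn n}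
    (h : EChain F i j m) : F.deg j + 1 ≤ F.deg i := by
  induction h with
  | base hd _ => omega
  | step _ hd _ ih => omega

lemma Eset_finite_aux {n : ℕ} (F : BasedSeq n) :
    ∀ N : ℕ, ∀ i j : F.I, (F.deg i - F.deg j).toNat ≤ N → (Eset F i j).Finite := by
  intro N
  induction N with
  | zero =>
    intro i j h
    have : Eset F i j = ∅ := by
      ext m
      simp only [Set.mem_empty_iff_false, iff_false]
      intro hm
      have := hm.deg_lt
      omega
    rw [this]; exact Set.finite_empty
  | succ N ih =>
    intro i j h
    have hsub : Eset F i j ⊆ ↑(F.d i j).coeff.support ∪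
        ⋃ j' : F.I, Set.image2 (· + ·)
          {m | EChain F j' j m ∧ F.deg i = F.deg j' + 1} ↑(F.d i j').coeff.support := by
      intro m hm
      cases hm with
      | base hd hs => exact Or.inl hs
      | @step _ j' _ m₀ m' hc hd hs =>
        refine Or.inr (Set.mem_iUnion.2 ⟨j', ?_⟩)
        exact ⟨m₀, ⟨hc, hd⟩, m', hs, rfl⟩
    refine Set.Finite.subset (Set.Finite.union (Finset.finite_toSet _) ?_) hsub
    refine Set.finite_iUnion fun j' => ?_
    refine Set.Finite.image2 _ ?_ (Finset.finite_toSet _)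
    by_cases hd : F.deg i = F.deg j' + 1
    · by_cases hne : ∃ m₀, EChain F j' j m₀
      · obtain ⟨m₀, hm₀⟩ := hne
        have h1 := hm₀.deg_lt
        have : {m | EChain F j' j m ∧ F.deg i = F.deg j' + 1} ⊆ Eset F j' j :=
          fun m hm => hm.1
        exact Set.Finite.subset (ih j' j (by omega)) this
      · have : {m | EChain F j' j m ∧ F.deg i = F.deg j' + 1} = ∅ := by
          ext m; simp only [Set.mem_setOf_eq, Set.mem_empty_iff_false, iff_false]
          exact fun hm => hne ⟨m, hm.1⟩
        rw [this]; exact Set.finite_empty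
    · have : {m | EChain F j' j m ∧ F.deg i = F.deg j' + 1} = ∅ := by
        ext m; simp only [Set.mem_setOf_eq, Set.mem_empty_iff_false, iff_false]
        exact fun hm => hd hm.2
      rw [this]; exact Set.finite_empty

lemma Eset_finite {n : ℕ} (F : BasedSeq n) (i j : F.I) : (Eset F i j).Finite :=
  Eset_finite_aux F (F.deg i - F.deg j).toNat i j le_rfl

lemma goodTuple_deg {n : ℕ} {F : BasedSeq n} {k : ℕ} {c : Fin (k + 1) → F.I}
    {m : Fin k → Zn n} (h : goodTuple F c m) :
    ∀ a : Fin (k + 1), (a : ℤ) + F.deg (c 0) ≤ F.deg (c a) := by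
  intro a
  induction a using Fin.induction with
  | zero => simp
  | succ a ih =>
    have hE : m a ∈ Eset F (c a.succ) (c a.castSucc) := h a
    have h1 := (hE : EChain F _ _ _).deg_lt
    have h2 : ((a.castSucc : Fin (k+1)) : ℤ) = (a : ℤ) := by simp
    have h3 : ((a.succ : Fin (k+1)) : ℤ) = (a : ℤ) + 1 := by simp
    rw [h2] at ih
    omega

theorem stmt10 (n : ℕ) (hn : 1 ≤ n) (F : BasedSeq n) (x : F.I → Rn n) (i : F.I) :
    IsCompact (Sset F x i) := by
  classical
  -- lower bound for deg
  have hne : Nonempty F.I := ⟨i⟩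
  obtain ⟨i₀, hi₀⟩ := Finset.exists_min_image (Finset.univ : Finset F.I) F.deg
    ⟨i, Finset.mem_univ i⟩
  set B : ℤ := F.deg i₀ with hB
  have hBle : ∀ j : F.I, B ≤ F.deg j := fun j => hi₀.2 j (Finset.mem_univ j)
  set N : ℕ := (-B).toNat with hN
  -- the finite set of all possible exponents
  set T : Set (Zn n) := ⋃ p : F.I × F.I, Eset F p.1 p.2 with hT
  have hTfin : T.Finite := Set.finite_iUnion fun p => Eset_finite F p.1 p.2
  have key : Sset F x i = ⋃ k ∈ Set.Iic N, ⋃ c : Fin (k + 1) → F.I,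
      ⋃ m ∈ (Set.univ : Set (Fin k)).pi (fun _ => T),
      ⋃ (_ : c 0 = i ∧ goodTuple F c m), convexHull ℝ (Set.range (vtx F x c m)) := by
    ext y
    simp only [Sset, Set.mem_iUnion, Set.mem_Iic]
    constructor
    · rintro ⟨k, c, m, hcm, hy⟩
      refine ⟨k, ?_, c, m, ?_, hcm, hy⟩
      · -- bound on k
        have hd := goodTuple_deg hcm.2 (Fin.last k)
        have h0 : ((Fin.last k : Fin (k+1)) : ℤ) = (k : ℤ) := by simp
        rw [h0] at hd
        have h1 : F.deg (c (Fin.last k)) ≤ 0 := F.deg_nonpos _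
        have h2 : B ≤ F.deg (c 0) := hBle _
        omega
      · intro ℓ _
        exact Set.mem_iUnion.2 ⟨(c ℓ.succ, c ℓ.castSucc), hcm.2 ℓ⟩
    · rintro ⟨k, _, c, m, _, hcm, hy⟩
      exact ⟨k, c, m, hcm, hy⟩
  rw [key]
  refine (Set.finite_Iic N).isCompact_biUnion fun k _ => ?_
  refine isCompact_iUnion fun c => ?_
  refine (Set.Finite.pi fun _ => hTfin).isCompact_biUnion fun m _ => ?_
  rcases Classical.em (c 0 = i ∧ goodTuple F c m) with h | h
  · haveI : Nonempty (c 0 = i ∧ goodTuple F c m) := ⟨h⟩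
    rw [Set.iUnion_const]
    exact (Set.finite_range (vtx F x c m)).isCompact_convexHull ℝ
  · haveI : IsEmpty (PLift (c 0 = i ∧ goodTuple F c m)) := ⟨fun p => h p.down⟩
    rw [show (⋃ (_ : c 0 = i ∧ goodTuple F c m), convexHull ℝ (Set.range (vtx F x c m))) = ∅ by
      simp [Set.iUnion_eq_empty, h]]
    exact isCompact_empty

end
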